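/- Trigonometric solution: Let a ∈ ℝ and set X = x + 2t + a. On the open set where cos X ≠ 0, define u(x,t) = 1 − 2/cos²(X) and y(x,t) = (2(6t − x) − sin(2X))/cos²(X). Then (u,y) satisfies both equations of system (Dx) and both equations of system (Dt), and the first integrals take the values H0 = 2y y_xx − y_x² + 4u y² = −16 and H1 = 2z z_xx − z_x² + 4(u−1)z² = −4, where z = 12tu + 2x + y. -/

import Mathlib

/-- Partial derivative in the first (space) variable. -/
noncomputable def dx (f : ℝ → ℝ → ℝ) : ℝ → ℝ → ℝ := fun x t => deriv (fun x' => f x' t) x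

/-- Partial derivative in the second (time) variable. -/
noncomputable def dt (f : ℝ → ℝ → ℝ) : ℝ → ℝ → ℝ := fun x t => deriv (fun t' => f x t') t

/-- The KdV equation `u_t = u_xxx + 6 u u_x`. -/
def KdV (u : ℝ → ℝ → ℝ) : Prop :=
  ∀ x t, dt u x t = dx (dx (dx u)) x t + 6 * u x t * dx u x t

/-- `v` is the potential of `u`: `v_x = u`, `v_t = u_xx + 3 u²`. -/
def Potential (u v : ℝ → ℝ → ℝ) : Prop :=
  ∀ x t, dx v x t = u x t ∧ dt v x t = dx (dx u) x t + 3 * (u x t) ^ 2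

/-- Equation (eqt): the stationary equation for the linear combination
`u_{τ5} + k1 u_{τ3} + k2 u_{τ1}` of nonautonomous symmetries of KdV. -/
def Eqt (k1 k2 : ℝ) (u v : ℝ → ℝ → ℝ) : Prop :=
  ∀ x t,
    3 * t * dx (fun x t => dx (dx (dx (dx u))) x t + 10 * u x t * dx (dx u) x t
        + 5 * (dx u x t) ^ 2 + 10 * (u x t) ^ 3) x t
    + x * dx (fun x t => dx (dx u) x t + 3 * (u x t) ^ 2) x t
    + 4 * dx (dx u) x t + 8 * (u x t) ^ 2 + 2 * dx u x t * v x t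
    + k1 * (3 * t * dx (fun x t => dx (dx u) x t + 3 * (u x t) ^ 2) x t
        + x * dx u x t + 2 * u x t)
    + k2 * (6 * t * dx u x t + 1) = 0

/-- Pointwise form of system (Dx): the stationary equation and the equation for `y`. -/
def DxEqAt (u y : ℝ → ℝ → ℝ) (x t : ℝ) : Prop :=
  3 * t * (dx (dx (dx u)) x t + 6 * u x t * dx u x t - 4 * dx u x t)
      + x * dx u x t + 2 * u x t - dx y x t - 2 = 0 ∧
  dx (dx (dx y)) x t + 4 * u x t * dx y x t + 2 * dx u x t * y x t = 0

/-- Pointwise form of system (Dt): the KdV flow for `u` and the induced flow for `y`. -/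
def DtEqAt (u y : ℝ → ℝ → ℝ) (x t : ℝ) : Prop :=
  dt u x t = dx (dx (dx u)) x t + 6 * u x t * dx u x t ∧
  dt y x t = 2 * u x t * dx y x t - 2 * dx u x t * y x t

/-- The first integral `H0 = 2 y y_xx - y_x² + 4 u y²`. -/
noncomputable def H0expr (u y : ℝ → ℝ → ℝ) : ℝ → ℝ → ℝ := fun x t =>
  2 * y x t * dx (dx y) x t - (dx y x t) ^ 2 + 4 * u x t * (y x t) ^ 2

/-- The function `z = 12 t u + 2 x + y`. -/
noncomputable def zfun (u y : ℝ → ℝ → ℝ) : ℝ → ℝ → ℝ := fun x t =>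
  12 * t * u x t + 2 * x + y x t

/-- The first integral `H1 = 2 z z_xx - z_x² + 4 (u - 1) z²` with `z = 12 t u + 2 x + y`. -/
noncomputable def H1expr (u y : ℝ → ℝ → ℝ) : ℝ → ℝ → ℝ := fun x t =>
  2 * zfun u y x t * dx (dx (zfun u y)) x t - (dx (zfun u y) x t) ^ 2
    + 4 * (u x t - 1) * (zfun u y x t) ^ 2


section TrigHelpers

/-- `1/cos² = 1 + tan²` where `cos ≠ 0`. -/
private lemma sec_sq_aux (X : ℝ) (hc : Real.cos X ≠ 0) :
    1 / Real.cos X ^ 2 = 1 + Real.tan X ^ 2 := by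
  rw [Real.tan_eq_sin_div_cos]
  have h := Real.sin_sq_add_cos_sq X
  field_simp
  linarith

private lemma tanDx (a t x : ℝ) (hc : Real.cos (x + 2*t + a) ≠ 0) :
    HasDerivAt (fun x' : ℝ => Real.tan (x' + 2*t + a)) (1 + Real.tan (x + 2*t + a)^2) x := by
  have h1 : HasDerivAt (fun x' : ℝ => x' + 2*t + a) 1 x :=
    ((hasDerivAt_id x).add_const (2*t)).add_const a
  have h2 := (Real.hasDerivAt_tan hc).comp x h1
  have e : 1 / Real.cos (x+2*t+a)^2 * 1 = 1 + Real.tan (x+2*t+a)^2 := by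
    rw [mul_one, sec_sq_aux _ hc]
  exact e ▸ h2

private lemma tanDt (a x t : ℝ) (hc : Real.cos (x + 2*t + a) ≠ 0) :
    HasDerivAt (fun t' : ℝ => Real.tan (x + 2*t' + a)) (2 * (1 + Real.tan (x + 2*t + a)^2)) t := by
  have h1 : HasDerivAt (fun t' : ℝ => x + 2*t' + a) (2*1) t :=
    (((hasDerivAt_id t).const_mul 2).const_add x).add_const a
  have h2 := (Real.hasDerivAt_tan hc).comp t h1
  have e : 1 / Real.cos (x+2*t+a)^2 * (2*1) = 2 * (1 + Real.tan (x+2*t+a)^2) := by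
    rw [sec_sq_aux _ hc]; ring
  exact e ▸ h2

/-- Master derivative lemma in the `x` direction, for functions which are polynomials
in `tan (x + 2t + a)` with coefficients linear in `x`. -/
private lemma master_x (a t x : ℝ) (hc : Real.cos (x + 2*t + a) ≠ 0)
    (p0 p1 p2 p3 p4 p5 q0 q1 q2 q3 q4 q5 : ℝ) {f : ℝ → ℝ}
    (hf : ∀ x', f x' = p0 + q0*x' + (p1+q1*x')*Real.tan (x'+2*t+a)
        + (p2+q2*x')*Real.tan (x'+2*t+a)^2 + (p3+q3*x')*Real.tan (x'+2*t+a)^3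
        + (p4+q4*x')*Real.tan (x'+2*t+a)^4 + (p5+q5*x')*Real.tan (x'+2*t+a)^5)
    {D : ℝ}
    (hD : D = q0 + q1*Real.tan (x+2*t+a) + q2*Real.tan (x+2*t+a)^2 + q3*Real.tan (x+2*t+a)^3
        + q4*Real.tan (x+2*t+a)^4 + q5*Real.tan (x+2*t+a)^5
        + (1 + Real.tan (x+2*t+a)^2) * ((p1+q1*x) + 2*(p2+q2*x)*Real.tan (x+2*t+a)
          + 3*(p3+q3*x)*Real.tan (x+2*t+a)^2 + 4*(p4+q4*x)*Real.tan (x+2*t+a)^3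
          + 5*(p5+q5*x)*Real.tan (x+2*t+a)^4)) :
    HasDerivAt f D x := by
  have hT := tanDx a t x hc
  have hlin : ∀ p q : ℝ, HasDerivAt (fun x' : ℝ => p + q*x') q x := fun p q => by
    simpa using ((hasDerivAt_id x).const_mul q).const_add p
  have h := (((((hlin p0 q0).add ((hlin p1 q1).mul hT)).add
      ((hlin p2 q2).mul (hT.pow 2))).add
      ((hlin p3 q3).mul (hT.pow 3))).add
      ((hlin p4 q4).mul (hT.pow 4))).add
      ((hlin p5 q5).mul (hT.pow 5))
  have hfe : f = fun x' => p0 + q0*x' + (p1+q1*x')*Real.tan (x'+2*t+a)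
        + (p2+q2*x')*Real.tan (x'+2*t+a)^2 + (p3+q3*x')*Real.tan (x'+2*t+a)^3
        + (p4+q4*x')*Real.tan (x'+2*t+a)^4 + (p5+q5*x')*Real.tan (x'+2*t+a)^5 := funext hf
  rw [hfe, hD]
  refine h.congr_deriv ?_
  simp only [Pi.pow_apply]; norm_num
  ring

/-- Master derivative lemma in the `t` direction. -/
private lemma master_t (a x t : ℝ) (hc : Real.cos (x + 2*t + a) ≠ 0)
    (p0 p1 p2 q0 q1 q2 : ℝ) {f : ℝ → ℝ}
    (hf : ∀ t', f t' = p0 + q0*t' + (p1+q1*t')*Real.tan (x+2*t'+a)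
        + (p2+q2*t')*Real.tan (x+2*t'+a)^2)
    {D : ℝ}
    (hD : D = q0 + q1*Real.tan (x+2*t+a) + q2*Real.tan (x+2*t+a)^2
        + 2 * (1 + Real.tan (x+2*t+a)^2) * ((p1+q1*t) + 2*(p2+q2*t)*Real.tan (x+2*t+a))) :
    HasDerivAt f D t := by
  have hT := tanDt a x t hc
  have hlin : ∀ p q : ℝ, HasDerivAt (fun t' : ℝ => p + q*t') q t := fun p q => by
    simpa using ((hasDerivAt_id t).const_mul q).const_add p
  have h := (((hlin p0 q0).add ((hlin p1 q1).mul hT)).add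
      ((hlin p2 q2).mul (hT.pow 2)))
  have hfe : f = fun t' => p0 + q0*t' + (p1+q1*t')*Real.tan (x+2*t'+a)
        + (p2+q2*t')*Real.tan (x+2*t'+a)^2 := funext hf
  rw [hfe, hD]
  refine h.congr_deriv ?_
  simp only [Pi.pow_apply]; norm_num
  ring

/-- The trigonometric `u`. -/
noncomputable def uS (a : ℝ) : ℝ → ℝ → ℝ := fun x t => 1 - 2 / (Real.cos (x + 2 * t + a)) ^ 2

/-- The trigonometric `y`. -/
noncomputable def yS (a : ℝ) : ℝ → ℝ → ℝ := fun x t =>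
  (2 * (6 * t - x) - Real.sin (2 * (x + 2 * t + a))) / (Real.cos (x + 2 * t + a)) ^ 2

private lemma uconv (a x t : ℝ) (hc : Real.cos (x + 2*t + a) ≠ 0) :
    uS a x t = -1 - 2 * Real.tan (x + 2*t + a)^2 := by
  simp only [uS]
  rw [Real.tan_eq_sin_div_cos]
  have h := Real.sin_sq_add_cos_sq (x + 2*t + a)
  field_simp
  linear_combination 2 * h

private lemma yconv (a x t : ℝ) (hc : Real.cos (x + 2*t + a) ≠ 0) :
    yS a x t = 12*t - 2*x - 2*Real.tan (x + 2*t + a)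
      + (12*t - 2*x) * Real.tan (x + 2*t + a)^2 := by
  simp only [yS]
  rw [Real.sin_two_mul, Real.tan_eq_sin_div_cos]
  have h := Real.sin_sq_add_cos_sq (x + 2*t + a)
  field_simp
  linear_combination (-(12*t - 2*x)) * h

private lemma zconv (a x t : ℝ) (hc : Real.cos (x + 2*t + a) ≠ 0) :
    zfun (uS a) (yS a) x t = -2*Real.tan (x + 2*t + a)
      + (-12*t - 2*x) * Real.tan (x + 2*t + a)^2 := by
  simp only [zfun]
  rw [uconv a x t hc, yconv a x t hc]
  ring

private lemma evx (a t x : ℝ) (hc : Real.cos (x + 2*t + a) ≠ 0) :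
    ∀ᶠ x' in nhds x, Real.cos (x' + 2*t + a) ≠ 0 := by
  have hcont : ContinuousAt (fun x' : ℝ => Real.cos (x' + 2*t + a)) x := by fun_prop
  exact hcont.eventually_ne hc

private lemma evt (a x t : ℝ) (hc : Real.cos (x + 2*t + a) ≠ 0) :
    ∀ᶠ t' in nhds t, Real.cos (x + 2*t' + a) ≠ 0 := by
  have hcont : ContinuousAt (fun t' : ℝ => Real.cos (x + 2*t' + a)) t := by fun_prop
  exact hcont.eventually_ne hc

private lemma udx1 (a x t : ℝ) (hc : Real.cos (x + 2*t + a) ≠ 0) :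
    dx (uS a) x t = -4*Real.tan (x + 2*t + a)^3 - 4*Real.tan (x + 2*t + a) := by
  have hev : (fun x' => uS a x' t) =ᶠ[nhds x]
      (fun x' => -1 - 2 * Real.tan (x' + 2*t + a)^2) := by
    filter_upwards [evx a t x hc] with x' hx'
    exact uconv a x' t hx'
  calc dx (uS a) x t = deriv (fun x' => uS a x' t) x := rfl
    _ = deriv (fun x' => -1 - 2 * Real.tan (x' + 2*t + a)^2) x := hev.deriv_eq
    _ = _ := (master_x a t x hc (-1) 0 (-2) 0 0 0 0 0 0 0 0 0
        (fun x' => by ring) (by ring)).deriv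

private lemma udx2 (a x t : ℝ) (hc : Real.cos (x + 2*t + a) ≠ 0) :
    dx (dx (uS a)) x t = -12*Real.tan (x + 2*t + a)^4 - 16*Real.tan (x + 2*t + a)^2 - 4 := by
  have hev : (fun x' => dx (uS a) x' t) =ᶠ[nhds x]
      (fun x' => -4*Real.tan (x' + 2*t + a)^3 - 4*Real.tan (x' + 2*t + a)) := by
    filter_upwards [evx a t x hc] with x' hx'
    exact udx1 a x' t hx'
  calc dx (dx (uS a)) x t = deriv (fun x' => dx (uS a) x' t) x := rfl
    _ = deriv (fun x' => -4*Real.tan (x' + 2*t + a)^3 - 4*Real.tan (x' + 2*t + a)) x :=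
        hev.deriv_eq
    _ = _ := (master_x a t x hc 0 (-4) 0 (-4) 0 0 0 0 0 0 0 0
        (fun x' => by ring) (by ring)).deriv

private lemma udx3 (a x t : ℝ) (hc : Real.cos (x + 2*t + a) ≠ 0) :
    dx (dx (dx (uS a))) x t = -48*Real.tan (x + 2*t + a)^5 - 80*Real.tan (x + 2*t + a)^3
      - 32*Real.tan (x + 2*t + a) := by
  have hev : (fun x' => dx (dx (uS a)) x' t) =ᶠ[nhds x]
      (fun x' => -12*Real.tan (x' + 2*t + a)^4 - 16*Real.tan (x' + 2*t + a)^2 - 4) := by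
    filter_upwards [evx a t x hc] with x' hx'
    exact udx2 a x' t hx'
  calc dx (dx (dx (uS a))) x t = deriv (fun x' => dx (dx (uS a)) x' t) x := rfl
    _ = deriv (fun x' => -12*Real.tan (x' + 2*t + a)^4 - 16*Real.tan (x' + 2*t + a)^2 - 4) x :=
        hev.deriv_eq
    _ = _ := (master_x a t x hc (-4) 0 (-16) 0 (-12) 0 0 0 0 0 0 0
        (fun x' => by ring) (by ring)).deriv

private lemma ydx1 (a x t : ℝ) (hc : Real.cos (x + 2*t + a) ≠ 0) :
    dx (yS a) x t = -4 + (24*t - 4*x)*Real.tan (x + 2*t + a) - 4*Real.tan (x + 2*t + a)^2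
      + (24*t - 4*x)*Real.tan (x + 2*t + a)^3 := by
  have hev : (fun x' => yS a x' t) =ᶠ[nhds x]
      (fun x' => 12*t - 2*x' - 2*Real.tan (x' + 2*t + a)
        + (12*t - 2*x') * Real.tan (x' + 2*t + a)^2) := by
    filter_upwards [evx a t x hc] with x' hx'
    exact yconv a x' t hx'
  calc dx (yS a) x t = deriv (fun x' => yS a x' t) x := rfl
    _ = deriv (fun x' => 12*t - 2*x' - 2*Real.tan (x' + 2*t + a)
        + (12*t - 2*x') * Real.tan (x' + 2*t + a)^2) x := hev.deriv_eq
    _ = _ := (master_x a t x hc (12*t) (-2) (12*t) 0 0 0 (-2) 0 (-2) 0 0 0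
        (fun x' => by ring) (by ring)).deriv

private lemma ydx2 (a x t : ℝ) (hc : Real.cos (x + 2*t + a) ≠ 0) :
    dx (dx (yS a)) x t = 24*t - 4*x - 12*Real.tan (x + 2*t + a)
      + (96*t - 16*x)*Real.tan (x + 2*t + a)^2 - 12*Real.tan (x + 2*t + a)^3
      + (72*t - 12*x)*Real.tan (x + 2*t + a)^4 := by
  have hev : (fun x' => dx (yS a) x' t) =ᶠ[nhds x]
      (fun x' => -4 + (24*t - 4*x')*Real.tan (x' + 2*t + a) - 4*Real.tan (x' + 2*t + a)^2
        + (24*t - 4*x')*Real.tan (x' + 2*t + a)^3) := by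
    filter_upwards [evx a t x hc] with x' hx'
    exact ydx1 a x' t hx'
  calc dx (dx (yS a)) x t = deriv (fun x' => dx (yS a) x' t) x := rfl
    _ = deriv (fun x' => -4 + (24*t - 4*x')*Real.tan (x' + 2*t + a)
        - 4*Real.tan (x' + 2*t + a)^2 + (24*t - 4*x')*Real.tan (x' + 2*t + a)^3) x :=
        hev.deriv_eq
    _ = _ := (master_x a t x hc (-4) (24*t) (-4) (24*t) 0 0 0 (-4) 0 (-4) 0 0
        (fun x' => by ring) (by ring)).deriv

private lemma ydx3 (a x t : ℝ) (hc : Real.cos (x + 2*t + a) ≠ 0) :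
    dx (dx (dx (yS a))) x t = -16 + (192*t - 32*x)*Real.tan (x + 2*t + a)
      - 64*Real.tan (x + 2*t + a)^2 + (480*t - 80*x)*Real.tan (x + 2*t + a)^3
      - 48*Real.tan (x + 2*t + a)^4 + (288*t - 48*x)*Real.tan (x + 2*t + a)^5 := by
  have hev : (fun x' => dx (dx (yS a)) x' t) =ᶠ[nhds x]
      (fun x' => 24*t - 4*x' - 12*Real.tan (x' + 2*t + a)
        + (96*t - 16*x')*Real.tan (x' + 2*t + a)^2 - 12*Real.tan (x' + 2*t + a)^3
        + (72*t - 12*x')*Real.tan (x' + 2*t + a)^4) := by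
    filter_upwards [evx a t x hc] with x' hx'
    exact ydx2 a x' t hx'
  calc dx (dx (dx (yS a))) x t = deriv (fun x' => dx (dx (yS a)) x' t) x := rfl
    _ = deriv (fun x' => 24*t - 4*x' - 12*Real.tan (x' + 2*t + a)
        + (96*t - 16*x')*Real.tan (x' + 2*t + a)^2 - 12*Real.tan (x' + 2*t + a)^3
        + (72*t - 12*x')*Real.tan (x' + 2*t + a)^4) x := hev.deriv_eq
    _ = _ := (master_x a t x hc (24*t) (-12) (96*t) (-12) (72*t) 0 (-4) 0 (-16) 0 (-12) 0
        (fun x' => by ring) (by ring)).deriv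

private lemma zdx1 (a x t : ℝ) (hc : Real.cos (x + 2*t + a) ≠ 0) :
    dx (zfun (uS a) (yS a)) x t = -2 + (-24*t - 4*x)*Real.tan (x + 2*t + a)
      - 4*Real.tan (x + 2*t + a)^2 + (-24*t - 4*x)*Real.tan (x + 2*t + a)^3 := by
  have hev : (fun x' => zfun (uS a) (yS a) x' t) =ᶠ[nhds x]
      (fun x' => -2*Real.tan (x' + 2*t + a) + (-12*t - 2*x')*Real.tan (x' + 2*t + a)^2) := by
    filter_upwards [evx a t x hc] with x' hx'
    exact zconv a x' t hx'
  calc dx (zfun (uS a) (yS a)) x t = deriv (fun x' => zfun (uS a) (yS a) x' t) x := rfl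
    _ = deriv (fun x' => -2*Real.tan (x' + 2*t + a)
        + (-12*t - 2*x')*Real.tan (x' + 2*t + a)^2) x := hev.deriv_eq
    _ = _ := (master_x a t x hc 0 (-2) (-12*t) 0 0 0 0 0 (-2) 0 0 0
        (fun x' => by ring) (by ring)).deriv

private lemma zdx2 (a x t : ℝ) (hc : Real.cos (x + 2*t + a) ≠ 0) :
    dx (dx (zfun (uS a) (yS a))) x t = -24*t - 4*x - 12*Real.tan (x + 2*t + a)
      + (-96*t - 16*x)*Real.tan (x + 2*t + a)^2 - 12*Real.tan (x + 2*t + a)^3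
      + (-72*t - 12*x)*Real.tan (x + 2*t + a)^4 := by
  have hev : (fun x' => dx (zfun (uS a) (yS a)) x' t) =ᶠ[nhds x]
      (fun x' => -2 + (-24*t - 4*x')*Real.tan (x' + 2*t + a)
        - 4*Real.tan (x' + 2*t + a)^2 + (-24*t - 4*x')*Real.tan (x' + 2*t + a)^3) := by
    filter_upwards [evx a t x hc] with x' hx'
    exact zdx1 a x' t hx'
  calc dx (dx (zfun (uS a) (yS a))) x t
      = deriv (fun x' => dx (zfun (uS a) (yS a)) x' t) x := rfl
    _ = deriv (fun x' => -2 + (-24*t - 4*x')*Real.tan (x' + 2*t + a)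
        - 4*Real.tan (x' + 2*t + a)^2 + (-24*t - 4*x')*Real.tan (x' + 2*t + a)^3) x :=
        hev.deriv_eq
    _ = _ := (master_x a t x hc (-2) (-24*t) (-4) (-24*t) 0 0 0 (-4) 0 (-4) 0 0
        (fun x' => by ring) (by ring)).deriv

private lemma udt1 (a x t : ℝ) (hc : Real.cos (x + 2*t + a) ≠ 0) :
    dt (uS a) x t = -8*Real.tan (x + 2*t + a)^3 - 8*Real.tan (x + 2*t + a) := by
  have hev : (fun t' => uS a x t') =ᶠ[nhds t]
      (fun t' => -1 - 2 * Real.tan (x + 2*t' + a)^2) := by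
    filter_upwards [evt a x t hc] with t' ht'
    exact uconv a x t' ht'
  calc dt (uS a) x t = deriv (fun t' => uS a x t') t := rfl
    _ = deriv (fun t' => -1 - 2 * Real.tan (x + 2*t' + a)^2) t := hev.deriv_eq
    _ = _ := (master_t a x t hc (-1) 0 (-2) 0 0 0
        (fun t' => by ring) (by ring)).deriv

private lemma ydt1 (a x t : ℝ) (hc : Real.cos (x + 2*t + a) ≠ 0) :
    dt (yS a) x t = 8 + (48*t - 8*x)*Real.tan (x + 2*t + a) + 8*Real.tan (x + 2*t + a)^2
      + (48*t - 8*x)*Real.tan (x + 2*t + a)^3 := by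
  have hev : (fun t' => yS a x t') =ᶠ[nhds t]
      (fun t' => 12*t' - 2*x - 2*Real.tan (x + 2*t' + a)
        + (12*t' - 2*x) * Real.tan (x + 2*t' + a)^2) := by
    filter_upwards [evt a x t hc] with t' ht'
    exact yconv a x t' ht'
  calc dt (yS a) x t = deriv (fun t' => yS a x t') t := rfl
    _ = deriv (fun t' => 12*t' - 2*x - 2*Real.tan (x + 2*t' + a)
        + (12*t' - 2*x) * Real.tan (x + 2*t' + a)^2) t := hev.deriv_eq
    _ = _ := (master_t a x t hc (-2*x) (-2) (-2*x) 12 0 12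
        (fun t' => by ring) (by ring)).deriv

end TrigHelpers

/-- The trigonometric solution `u = 1 - 2/cos²X`, `y = (2(6t - x) - sin 2X)/cos²X`
with `X = x + 2t + a`, on the set where `cos X ≠ 0`, solves systems (Dx), (Dt),
with `H0 = -16` and `H1 = -4`. -/
theorem trigonometric_solution (a : ℝ) :
    ∀ x t, Real.cos (x + 2 * t + a) ≠ 0 →
      DxEqAt (fun x t => 1 - 2 / (Real.cos (x + 2 * t + a)) ^ 2)
        (fun x t => (2 * (6 * t - x) - Real.sin (2 * (x + 2 * t + a)))
          / (Real.cos (x + 2 * t + a)) ^ 2) x t ∧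
      DtEqAt (fun x t => 1 - 2 / (Real.cos (x + 2 * t + a)) ^ 2)
        (fun x t => (2 * (6 * t - x) - Real.sin (2 * (x + 2 * t + a)))
          / (Real.cos (x + 2 * t + a)) ^ 2) x t ∧
      H0expr (fun x t => 1 - 2 / (Real.cos (x + 2 * t + a)) ^ 2)
        (fun x t => (2 * (6 * t - x) - Real.sin (2 * (x + 2 * t + a)))
          / (Real.cos (x + 2 * t + a)) ^ 2) x t = -16 ∧
      H1expr (fun x t => 1 - 2 / (Real.cos (x + 2 * t + a)) ^ 2)
        (fun x t => (2 * (6 * t - x) - Real.sin (2 * (x + 2 * t + a)))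
          / (Real.cos (x + 2 * t + a)) ^ 2) x t = -4 := by
  intro x t hc
  show DxEqAt (uS a) (yS a) x t ∧ DtEqAt (uS a) (yS a) x t ∧
      H0expr (uS a) (yS a) x t = -16 ∧ H1expr (uS a) (yS a) x t = -4
  refine ⟨⟨?_, ?_⟩, ⟨?_, ?_⟩, ?_, ?_⟩
  · rw [udx3 a x t hc, udx1 a x t hc, ydx1 a x t hc, uconv a x t hc]; ring
  · rw [ydx3 a x t hc, uconv a x t hc, ydx1 a x t hc, udx1 a x t hc, yconv a x t hc]; ring
  · rw [udt1 a x t hc, udx3 a x t hc, uconv a x t hc, udx1 a x t hc]; ring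
  · rw [ydt1 a x t hc, uconv a x t hc, ydx1 a x t hc, udx1 a x t hc, yconv a x t hc]; ring
  · simp only [H0expr]
    rw [ydx2 a x t hc, ydx1 a x t hc, uconv a x t hc, yconv a x t hc]; ring
  · simp only [H1expr]
    rw [zdx2 a x t hc, zdx1 a x t hc, zconv a x t hc, uconv a x t hc]; ring
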